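/- Let $f:\mathbb{R}^q\to\mathbb{R}$ be continuous with $(|x|^2+1)^{-1/2}f(x)\to 0$ as $|x|\to\infty$. Define $\mathcal{S}(f)$ on the unit sphere $S^q\subset\mathbb{R}^{q+1}$ by $\mathcal{S}(f)(u)=|u_{q+1}|\,f(u_1/u_{q+1},\dots,u_q/u_{q+1})$ for $u_{q+1}\neq 0$ and $\mathcal{S}(f)(u)=0$ for $u_{q+1}=0$. Then $\mathcal{S}(f)$ is a continuous even function on $S^q$ vanishing on the equator $\{u\in S^q: u_{q+1}=0\}$. -/

import Mathlib

open Filter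

private lemma abs_coord_le_norm {n : ℕ} (x : EuclideanSpace ℝ (Fin n)) (i : Fin n) :
    |x i| ≤ ‖x‖ := by
  rw [EuclideanSpace.norm_eq, ← Real.sqrt_sq_eq_abs]
  apply Real.sqrt_le_sqrt
  calc (x i)^2 = ‖x i‖^2 := by rw [Real.norm_eq_abs, sq_abs]
  _ ≤ ∑ j, ‖x j‖^2 :=
    Finset.single_le_sum (f := fun j => ‖x j‖^2) (fun j _ => sq_nonneg _) (Finset.mem_univ i)

private lemma key_sqrt (q : ℕ) (u : EuclideanSpace ℝ (Fin (q+1))) (hu : ‖u‖ = 1)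
    (ht : u (Fin.last q) ≠ 0) (x : EuclideanSpace ℝ (Fin q))
    (hxdef : ∀ j, x j = u j.castSucc / u (Fin.last q)) :
    Real.sqrt (‖x‖^2 + 1) = 1 / |u (Fin.last q)| := by
  set t := u (Fin.last q) with htdef
  have h1 : ∑ i : Fin (q+1), (u i)^2 = 1 := by
    have h : ‖u‖^2 = ∑ i, ‖u i‖^2 := by
      rw [EuclideanSpace.norm_eq, Real.sq_sqrt (by positivity)]
    rw [hu, one_pow] at h
    simpa [Real.norm_eq_abs, sq_abs] using h.symm
  have hx : ‖x‖^2 = (∑ j : Fin q, (u j.castSucc)^2) / t^2 := by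
    rw [EuclideanSpace.norm_eq, Real.sq_sqrt (by positivity)]
    simp [hxdef, div_pow, Real.norm_eq_abs, sq_abs, Finset.sum_div]
  rw [hx]
  have ht2 : (0:ℝ) < t^2 := by positivity
  have h2 : (∑ j : Fin q, (u j.castSucc)^2) / t^2 + 1 = 1 / t^2 := by
    field_simp
    rw [← h1, Fin.sum_univ_castSucc]
  rw [h2, one_div, one_div, Real.sqrt_inv, Real.sqrt_sq_eq_abs]

/-- The wrapping `S(f)(u) = |u_{q+1}| f(u₁/u_{q+1},…,u_q/u_{q+1})` (set to `0` on the
equator) of a continuous function `f` on `ℝ^q` with `(|x|²+1)^{-1/2} f(x) → 0` at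
infinity is a continuous even function on the sphere `S^q` vanishing on the equator. -/
theorem wrapping_continuous_even (q : ℕ) (f : EuclideanSpace ℝ (Fin q) → ℝ)
    (hf : Continuous f)
    (hdecay : Tendsto (fun x : EuclideanSpace ℝ (Fin q) =>
      f x / Real.sqrt (‖x‖ ^ 2 + 1)) (cocompact _) (nhds 0)) :
    let Sf : EuclideanSpace ℝ (Fin (q + 1)) → ℝ :=
      fun u => if u (Fin.last q) = 0 then 0
        else |u (Fin.last q)| * f (WithLp.toLp 2 (fun j => u j.castSucc / u (Fin.last q)))
    ContinuousOn Sf {u : EuclideanSpace ℝ (Fin (q + 1)) | ‖u‖ = 1} ∧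
    (∀ u : EuclideanSpace ℝ (Fin (q + 1)), ‖u‖ = 1 → Sf (-u) = Sf u) ∧
    (∀ u : EuclideanSpace ℝ (Fin (q + 1)), ‖u‖ = 1 → u (Fin.last q) = 0 → Sf u = 0) := by
  intro Sf
  have keval : ∀ i, Continuous fun v : EuclideanSpace ℝ (Fin (q+1)) => v i :=
    fun i => (EuclideanSpace.proj i : _ →L[ℝ] ℝ).continuous
  refine ⟨?_, ?_, ?_⟩
  · -- continuity
    intro u hu
    simp only [Set.mem_setOf_eq] at hu
    by_cases h : u (Fin.last q) = 0
    · -- equator point: use decay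
      rw [ContinuousWithinAt]
      have hSfu : Sf u = 0 := by simp only [Sf, if_pos h]
      rw [hSfu, Metric.tendsto_nhdsWithin_nhds]
      intro ε hε
      obtain ⟨K, hK, hKsub⟩ := mem_cocompact.1 (hdecay (Metric.ball_mem_nhds 0 hε))
      obtain ⟨r, hr⟩ := hK.isBounded.subset_closedBall 0
      set r' : ℝ := max r 0 with hr'def
      have hr'0 : 0 ≤ r' := le_max_right _ _
      refine ⟨1 / Real.sqrt (r'^2 + 1), by positivity, ?_⟩
      intro v hv hdist
      simp only [Set.mem_setOf_eq] at hv
      by_cases hvt : v (Fin.last q) = 0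
      · simp only [Sf, if_pos hvt]
        simpa using hε
      · simp only [Sf, if_neg hvt]
        set x : EuclideanSpace ℝ (Fin q) :=
          WithLp.toLp 2 (fun j => v j.castSucc / v (Fin.last q)) with hxdef
        have hkey : Real.sqrt (‖x‖^2 + 1) = 1 / |v (Fin.last q)| :=
          key_sqrt q v hv hvt x (fun j => rfl)
        -- |v last| < δ
        have habs : |v (Fin.last q)| < 1 / Real.sqrt (r'^2 + 1) := by
          have h1 : |v (Fin.last q)| = |(v - u) (Fin.last q)| := by
            rw [PiLp.sub_apply, h, sub_zero]
          have h2 : |(v - u) (Fin.last q)| ≤ ‖v - u‖ := abs_coord_le_norm _ _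
          have h3 : ‖v - u‖ = dist v u := (dist_eq_norm v u).symm
          linarith
        -- ‖x‖ > r'
        have hxnorm : r' < ‖x‖ := by
          have happos : 0 < |v (Fin.last q)| := abs_pos.2 hvt
          have hsq : Real.sqrt (r'^2 + 1) < Real.sqrt (‖x‖^2 + 1) := by
            rw [hkey]
            rw [lt_div_iff₀ happos] at *
            calc Real.sqrt (r'^2+1) * |v (Fin.last q)|
                < Real.sqrt (r'^2+1) * (1 / Real.sqrt (r'^2+1)) := by
                  apply mul_lt_mul_of_pos_left habs (by positivity)
            _ = 1 := by field_simp
          have := (Real.sqrt_lt_sqrt_iff (by positivity)).1 hsq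
          have h4 : r'^2 < ‖x‖^2 := by linarith
          exact lt_of_pow_lt_pow_left₀ 2 (norm_nonneg x) h4
        have hxK : x ∉ K := fun hxK => by
          have := hr hxK
          rw [Metric.mem_closedBall, dist_zero_right] at this
          have : r' < r' := lt_of_lt_of_le hxnorm (le_trans this (le_max_left _ _))
          exact absurd this (lt_irrefl _)
        have hball := hKsub hxK
        rw [Set.mem_preimage, Metric.mem_ball, dist_zero_right, Real.norm_eq_abs] at hball
        rw [dist_zero_right, Real.norm_eq_abs]
        calc |( |v (Fin.last q)| * f x )| = |f x| * |v (Fin.last q)| := by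
              rw [abs_mul, abs_abs, mul_comm]
        _ = |f x / Real.sqrt (‖x‖^2 + 1)| := by
              rw [abs_div, abs_of_nonneg (Real.sqrt_nonneg _), hkey]
              field_simp
        _ < ε := hball
    · -- interior point: continuous there
      apply ContinuousAt.continuousWithinAt
      have hg : ContinuousAt (fun v : EuclideanSpace ℝ (Fin (q+1)) =>
          |v (Fin.last q)| * f (WithLp.toLp 2 (fun j => v j.castSucc / v (Fin.last q)))) u := by
        apply ContinuousAt.mul
        · exact ((keval _).abs).continuousAt
        · apply hf.continuousAt.comp
          apply (PiLp.continuous_toLp 2 _).continuousAt.comp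
          apply continuousAt_pi.2
          intro j
          exact ((keval j.castSucc).continuousAt).div ((keval _).continuousAt) h
      apply hg.congr
      have hne : ∀ᶠ v in nhds u, v (Fin.last q) ≠ 0 :=
        ((keval (Fin.last q)).continuousAt).eventually_ne h
      filter_upwards [hne] with v hv
      simp only [Sf, if_neg hv]
  · -- evenness
    intro u hu
    by_cases h : u (Fin.last q) = 0
    · have h' : (-u) (Fin.last q) = 0 := by rw [PiLp.neg_apply, h, neg_zero]
      simp only [Sf, if_pos h, if_pos h']
    · have h' : (-u) (Fin.last q) ≠ 0 := by
        rw [PiLp.neg_apply, neg_ne_zero]; exact h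
      simp only [Sf, if_neg h, if_neg h']
      congr 1
      · rw [PiLp.neg_apply, abs_neg]
      · congr 2
        funext j
        rw [PiLp.neg_apply, PiLp.neg_apply, neg_div_neg_eq]
  · -- vanishes on equator
    intro u _ h
    simp only [Sf, if_pos h]
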